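/- Let A ∈ ℂ^{N×N} with spectral radius ρ(A) < 1 and let V ∈ ℂ^N. Define φ(z) = A z/(⟨z, (Aᴴ − I)V⟩ + 1). If ⟨z, (Aᴴ − I)V⟩ + 1 ≠ 0 for every z ∈ B_N and φ maps B_N into B_N, then |V| ≤ 1. Moreover the n-th iterate of φ is given by φ_n(z) = Aⁿ z/(⟨z, ((Aⁿ)ᴴ − I)V⟩ + 1) for every n ∈ ℕ. -/

import Mathlib

open Matrix Set Complex

noncomputable section

/-- The Hermitian inner product `⟨x, y⟩ = ∑ j, x j * conj (y j)` on `ℂ^n`. -/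
def herm {n : Type*} [Fintype n] (x y : n → ℂ) : ℂ :=
  ∑ j, x j * (starRingEnd ℂ) (y j)

/-- The squared Euclidean norm on `ℂ^n`. -/
def enormSq {n : Type*} [Fintype n] (x : n → ℂ) : ℝ :=
  ∑ j, ‖x j‖ ^ 2

section Aux

open Filter
open scoped Matrix.Norms.L2Operator

variable {n : Type*} [Fintype n]

lemma herm_smul (a : ℂ) (x y : n → ℂ) : herm (a • x) y = a * herm x y := by
  simp [herm, Finset.mul_sum, mul_assoc]

lemma herm_sub_right (x y y' : n → ℂ) : herm x (y - y') = herm x y - herm x y' := by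
  simp [herm, mul_sub, Finset.sum_sub_distrib]

lemma herm_zero_right (x : n → ℂ) : herm x 0 = 0 := by simp [herm]

lemma herm_mulVec [DecidableEq n] (M : Matrix n n ℂ) (x y : n → ℂ) :
    herm (M.mulVec x) y = herm x (Mᴴ.mulVec y) := by
  simp only [herm, Matrix.mulVec, dotProduct, conjTranspose_apply, map_sum,
    _root_.map_mul, Finset.sum_mul, Finset.mul_sum]
  rw [Finset.sum_comm]
  congr 1; ext i; congr 1; ext j
  simp only [Complex.star_def, Complex.conj_conj]; ring

lemma herm_self (x : n → ℂ) : herm x x = (enormSq x : ℂ) := by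
  simp only [herm, enormSq, Complex.mul_conj']
  push_cast
  ring_nf

lemma enormSq_smul (a : ℂ) (x : n → ℂ) : enormSq (a • x) = ‖a‖ ^ 2 * enormSq x := by
  simp [enormSq, Finset.mul_sum, mul_pow]

lemma enormSq_eq (x : n → ℂ) : enormSq x = ‖(EuclideanSpace.equiv n ℂ).symm x‖ ^ 2 := by
  rw [EuclideanSpace.norm_eq, Real.sq_sqrt (by positivity)]
  rfl

lemma pow_norm_tendsto {N : ℕ} (A : Matrix (Fin N) (Fin N) ℂ)
    (hspec : ∀ μ ∈ spectrum ℂ A, ‖μ‖ < 1) :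
    Tendsto (fun n : ℕ => ‖A ^ n‖) atTop (nhds 0) := by
  have hfin : (spectrum ℂ A).Finite := A.finite_spectrum
  have hρ : spectralRadius ℂ A < 1 := by
    obtain ⟨r, hr0, hr1, hr⟩ : ∃ r : ℝ, 0 ≤ r ∧ r < 1 ∧ ∀ μ ∈ spectrum ℂ A, ‖μ‖ ≤ r := by
      classical
      set F : Finset ℝ := insert 0 (hfin.toFinset.image norm) with hF
      refine ⟨F.max' ⟨0, by simp [hF]⟩, ?_, ?_, ?_⟩
      · exact Finset.le_max' _ _ (by simp [hF])
      · apply (Finset.max'_lt_iff _ _).2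
        intro y hy
        simp only [hF, Finset.mem_insert, Finset.mem_image, Set.Finite.mem_toFinset] at hy
        rcases hy with rfl | ⟨μ, hμ, rfl⟩
        · norm_num
        · exact hspec μ hμ
      · intro μ hμ
        exact Finset.le_max' _ _ (by simp [hF, Set.Finite.mem_toFinset]; exact Or.inr ⟨μ, hμ, rfl⟩)
    calc spectralRadius ℂ A ≤ ENNReal.ofReal r := by
          refine iSup₂_le fun μ hμ => ?_
          rw [← ENNReal.ofReal_coe_nnreal]
          exact ENNReal.ofReal_le_ofReal (by simpa using hr μ hμ)
      _ < 1 := by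
          rw [← ENNReal.ofReal_one]
          exact ENNReal.ofReal_lt_ofReal_iff_of_nonneg hr0 |>.2 hr1
  have hgel := spectrum.pow_nnnorm_pow_one_div_tendsto_nhds_spectralRadius A
  obtain ⟨c, hc1, hc2⟩ := exists_between hρ
  have hev : ∀ᶠ n : ℕ in atTop, (‖A ^ n‖₊ : ENNReal) ^ (1 / (n:ℝ)) < c :=
    hgel.eventually_lt_const hc1
  have hct : c ≠ ⊤ := (hc2.trans_le le_top).ne
  have hcr1 : c.toReal < 1 := by
    have := (ENNReal.toReal_lt_toReal hct ENNReal.one_ne_top).2 hc2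
    simpa using this
  have hbd : ∀ᶠ n : ℕ in atTop, ‖A ^ n‖ ≤ c.toReal ^ n := by
    filter_upwards [hev, eventually_ge_atTop 1] with n hn hn1
    have hnn : (‖A ^ n‖₊ : ENNReal) ≤ c ^ n := by
      have hne : (n:ℝ) ≠ 0 := by
        have h1 : (1:ℝ) ≤ n := by exact_mod_cast hn1
        linarith
      have := ENNReal.rpow_le_rpow hn.le (by positivity : (0:ℝ) ≤ (n:ℝ))
      rwa [← ENNReal.rpow_mul, one_div, inv_mul_cancel₀ hne, ENNReal.rpow_one,
        ENNReal.rpow_natCast] at this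
    calc ‖A ^ n‖ = ((‖A ^ n‖₊ : ENNReal)).toReal := by simp
      _ ≤ (c ^ n).toReal := ENNReal.toReal_mono (by simp [hct, ENNReal.pow_ne_top]) hnn
      _ = c.toReal ^ n := by simp [ENNReal.toReal_pow]
  exact squeeze_zero' (Eventually.of_forall fun n => norm_nonneg _) hbd
    (tendsto_pow_atTop_nhds_zero_of_lt_one ENNReal.toReal_nonneg hcr1)

end Aux

/-- Let `ρ(A) < 1` and `φ(z) = A z / (⟨z, (Aᴴ - I)V⟩ + 1)` be a well-defined
self-map of the unit ball. Then `|V| ≤ 1`, and for every `n` the `n`-th iterate of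
`φ` is `φ_n(z) = Aⁿ z / (⟨z, ((Aⁿ)ᴴ - I)V⟩ + 1)`. -/
theorem stmt3 {N : ℕ} (A : Matrix (Fin N) (Fin N) ℂ)
    (hspec : ∀ μ ∈ spectrum ℂ A, ‖μ‖ < 1) (V : Fin N → ℂ)
    (φ : (Fin N → ℂ) → (Fin N → ℂ))
    (hφ : ∀ z, φ z = (herm z ((Aᴴ - 1).mulVec V) + 1)⁻¹ • A.mulVec z)
    (hden : ∀ z, enormSq z < 1 → herm z ((Aᴴ - 1).mulVec V) + 1 ≠ 0)
    (hmaps : ∀ z, enormSq z < 1 → enormSq (φ z) < 1) :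
    enormSq V ≤ 1 ∧
    ∀ (n : ℕ) (z : Fin N → ℂ), enormSq z < 1 →
      φ^[n] z = (herm z (((A ^ n)ᴴ - 1).mulVec V) + 1)⁻¹ • (A ^ n).mulVec z := by
  classical
  set c : ℕ → (Fin N → ℂ) → ℂ := fun n z => herm z (((A ^ n)ᴴ - 1).mulVec V) + 1 with hc
  have key : ∀ (n : ℕ) (z : Fin N → ℂ), enormSq z < 1 →
      enormSq (φ^[n] z) < 1 ∧ c n z ≠ 0 ∧ φ^[n] z = (c n z)⁻¹ • (A ^ n).mulVec z := by
    intro n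
    induction n with
    | zero =>
      intro z hz
      have h0 : c 0 z = 1 := by
        simp [hc, herm_zero_right]
      refine ⟨by simpa using hz, by simp [h0], ?_⟩
      simp [h0, Matrix.one_mulVec]
    | succ n ih =>
      intro z hz
      obtain ⟨hball, hcn, hfor⟩ := ih z hz
      set w := φ^[n] z with hw
      have hrel : herm w ((Aᴴ - 1).mulVec V) + 1 = (c n z)⁻¹ * c (n+1) z := by
        have h1 : (A ^ n)ᴴ.mulVec ((Aᴴ - 1).mulVec V)
            = ((A ^ (n+1))ᴴ - (A ^ n)ᴴ).mulVec V := by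
          rw [Matrix.mulVec_mulVec]
          congr 1
          rw [Matrix.mul_sub, Matrix.mul_one, ← Matrix.conjTranspose_mul, ← pow_succ']
        have h2 : herm w ((Aᴴ - 1).mulVec V)
            = (c n z)⁻¹ * (herm z ((A ^ (n+1))ᴴ.mulVec V) - herm z ((A ^ n)ᴴ.mulVec V)) := by
          rw [hfor, herm_smul, herm_mulVec, h1, Matrix.sub_mulVec, herm_sub_right]
        have h3 : c (n+1) z - c n z
            = herm z ((A ^ (n+1))ᴴ.mulVec V) - herm z ((A ^ n)ᴴ.mulVec V) := by
          simp only [hc, Matrix.sub_mulVec, herm_sub_right, Matrix.one_mulVec]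
          ring
        rw [h2, ← h3]
        field_simp
        ring
      have hwball : enormSq w < 1 := hball
      have hden2 : herm w ((Aᴴ - 1).mulVec V) + 1 ≠ 0 := hden w hwball
      have hcn1 : c (n+1) z ≠ 0 := by
        intro h
        exact hden2 (by rw [hrel, h, mul_zero])
      refine ⟨?_, hcn1, ?_⟩
      · rw [Function.iterate_succ_apply', ← hw]
        exact hmaps w hwball
      · rw [Function.iterate_succ_apply', ← hw, hφ, hrel, hfor, Matrix.mulVec_smul,
          smul_smul, Matrix.mulVec_mulVec, ← pow_succ']
        congr 1
        field_simp
  refine ⟨?_, fun n z hz => (key n z hz).2.2⟩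
  -- Bound on the vectors `((A^n)ᴴ - 1) V`
  have hb : ∀ n : ℕ, enormSq (((A ^ n)ᴴ - 1).mulVec V) ≤ 1 := by
    intro n
    by_contra h
    push_neg at h
    set u := ((A ^ n)ᴴ - 1).mulVec V with hu
    have hs : (0:ℝ) < enormSq u := lt_trans one_pos h
    set a : ℂ := ((-(enormSq u)⁻¹ : ℝ) : ℂ) with ha
    have h1 : enormSq (a • u) < 1 := by
      rw [enormSq_smul]
      have : ‖a‖ ^ 2 = ((enormSq u)⁻¹) ^ 2 := by
        rw [ha, Complex.norm_real, Real.norm_eq_abs, abs_neg]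
        exact sq_abs _
      rw [this]
      have : (enormSq u)⁻¹ ^ 2 * enormSq u = (enormSq u)⁻¹ := by
        field_simp
      rw [this]
      rw [inv_lt_one_iff₀]
      right; exact h
    have h2 : c n (a • u) = 0 := by
      simp only [hc, ← hu, herm_smul, herm_self, ha]
      push_cast
      have : (enormSq u : ℂ) ≠ 0 := by exact_mod_cast hs.ne'
      field_simp
      norm_num
    exact (key n (a • u) h1).2.1 h2
  -- Limit argument
  open scoped Matrix.Norms.L2Operator in
  have htend := pow_norm_tendsto A hspec
  set E := (EuclideanSpace.equiv (Fin N) ℂ).symm with hE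
  have hVn : ∀ n : ℕ, open scoped Matrix.Norms.L2Operator in
      ‖E V‖ ≤ ‖A ^ n‖ * ‖E V‖ + 1 := by
    intro n
    have hsplit : E V = E ((A ^ n)ᴴ.mulVec V) - E (((A ^ n)ᴴ - 1).mulVec V) := by
      rw [← map_sub]
      congr 1
      rw [Matrix.sub_mulVec, Matrix.one_mulVec]
      abel
    calc ‖E V‖ ≤ ‖E ((A ^ n)ᴴ.mulVec V)‖ + ‖E (((A ^ n)ᴴ - 1).mulVec V)‖ := by
          rw [hsplit]; exact norm_sub_le _ _
      _ ≤ ‖A ^ n‖ * ‖E V‖ + 1 := by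
          gcongr
          · calc ‖E ((A ^ n)ᴴ.mulVec V)‖ ≤ ‖(A ^ n)ᴴ‖ * ‖E V‖ :=
                  Matrix.l2_opNorm_mulVec (A ^ n)ᴴ (E V)
              _ = ‖A ^ n‖ * ‖E V‖ := by rw [Matrix.l2_opNorm_conjTranspose]
          · have := hb n
            rw [enormSq_eq] at this
            nlinarith [norm_nonneg (E (((A ^ n)ᴴ - 1).mulVec V))]
  have hlim : Filter.Tendsto (fun n : ℕ => open scoped Matrix.Norms.L2Operator in ‖A ^ n‖ * ‖E V‖ + 1)
      Filter.atTop (nhds 1) := by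
    have := (htend.mul_const ‖E V‖).add_const 1
    simpa using this
  have hle : ‖E V‖ ≤ 1 := ge_of_tendsto hlim (Filter.Eventually.of_forall hVn)
  rw [enormSq_eq]
  exact pow_le_one₀ (norm_nonneg _) hle
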